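/- Let ω₀ > 0 be real and let A (n×n), B (n×m), C (m×n), D (m×m) be real matrices with I + A invertible, and let H(z) = D + C(zI − A)⁻¹B (matrices over ℂ). Suppose H is inner in the sense that for every nonzero z ∈ ℂ such that both zI − A and z⁻¹I − A are invertible, H(z)·H(z⁻¹)ᵀ = I. Let (Ā, B̄, C̄, D̄) be the Tustin transform of (A, B, C, D) with parameter ω₀ and G(s) = D̄ + C̄(sI − Ā)⁻¹B̄. Then G is inner in the continuous-time sense: for every s ∈ ℂ with s ≠ ±ω₀ such that sI − Ā, −sI − Ā, zI − A and z⁻¹I − A are all invertible (where z = (ω₀ + s)/(ω₀ − s) ≠ 0), one has G(s)·G(−s)ᵀ = I. -/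

import Mathlib

open Matrix
lemma tustin_key {n m : ℕ} (ω₀ s c : ℂ) (hc : c * c = 2 * ω₀)
    (a : Matrix (Fin n) (Fin n) ℂ) (b : Matrix (Fin n) (Fin m) ℂ)
    (cm : Matrix (Fin m) (Fin n) ℂ) (d : Matrix (Fin m) (Fin m) ℂ)
    (hP : IsUnit (1 + a)) (hs : ω₀ - s ≠ 0)
    (hz : IsUnit (((ω₀ + s) / (ω₀ - s)) • (1 : Matrix (Fin n) (Fin n) ℂ) - a)) :
    (d - cm * (1 + a)⁻¹ * b) +
      (c • (cm * (1 + a)⁻¹)) * (s • 1 - ω₀ • ((a - 1) * (1 + a)⁻¹))⁻¹ *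
        (c • ((1 + a)⁻¹ * b))
    = d + cm * ((((ω₀ + s) / (ω₀ - s)) • (1 : Matrix (Fin n) (Fin n) ℂ) - a))⁻¹ * b := by
  set P : Matrix (Fin n) (Fin n) ℂ := 1 + a with hPdef
  set z : ℂ := (ω₀ + s) / (ω₀ - s) with hzdef
  set M : Matrix (Fin n) (Fin n) ℂ := (ω₀ + s) • 1 - (ω₀ - s) • a with hMdef
  have hPd : IsUnit P.det := (Matrix.isUnit_iff_isUnit_det P).mp hP
  have hPP : P * P⁻¹ = 1 := Matrix.mul_nonsing_inv P hPd
  have hPP' : P⁻¹ * P = 1 := Matrix.nonsing_inv_mul P hPd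
  have hmulz : (ω₀ - s) * z = ω₀ + s := by rw [hzdef]; field_simp
  have hMz : M = (ω₀ - s) • (z • (1 : Matrix (Fin n) (Fin n) ℂ) - a) := by
    rw [smul_sub, smul_smul, hmulz, hMdef]
  have hMd : IsUnit M.det := by
    rw [hMz, Matrix.det_smul]
    exact ((isUnit_iff_ne_zero.mpr hs).pow _).mul ((Matrix.isUnit_iff_isUnit_det _).mp hz)
  have hMM : M * M⁻¹ = 1 := Matrix.mul_nonsing_inv M hMd
  have hMM' : M⁻¹ * M = 1 := Matrix.nonsing_inv_mul M hMd
  have hzinv : (z • (1 : Matrix (Fin n) (Fin n) ℂ) - a)⁻¹ = (ω₀ - s) • M⁻¹ := by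
    apply Matrix.inv_eq_right_inv
    have h1 : z • (1 : Matrix (Fin n) (Fin n) ℂ) - a = (ω₀ - s)⁻¹ • M := by
      rw [hMz, smul_smul, inv_mul_cancel₀ hs, one_smul]
    rw [h1, Matrix.smul_mul, Matrix.mul_smul, smul_smul, inv_mul_cancel₀ hs, one_smul, hMM]
  have hsA : s • (1 : Matrix (Fin n) (Fin n) ℂ) - ω₀ • ((a - 1) * P⁻¹) = M * P⁻¹ := by
    have h1 : s • (1 : Matrix (Fin n) (Fin n) ℂ) = (s • P) * P⁻¹ := by
      rw [Matrix.smul_mul, hPP]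
    rw [h1, ← Matrix.smul_mul, ← Matrix.sub_mul]
    congr 1
    rw [hMdef, hPdef]
    module
  have hinvA : (M * P⁻¹)⁻¹ = P * M⁻¹ := by
    apply Matrix.inv_eq_right_inv
    rw [Matrix.mul_assoc, ← Matrix.mul_assoc P⁻¹ P, hPP', Matrix.one_mul, hMM]
  have hE : (2 * ω₀) • (M⁻¹ * P⁻¹) - P⁻¹ = (ω₀ - s) • M⁻¹ := by
    have h2 : (2 * ω₀) • (1 : Matrix (Fin n) (Fin n) ℂ) - M = (ω₀ - s) • P := by
      rw [hMdef, hPdef]; module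
    calc (2 * ω₀) • (M⁻¹ * P⁻¹) - P⁻¹
        = M⁻¹ * ((2 * ω₀) • (1 : Matrix (Fin n) (Fin n) ℂ) - M) * P⁻¹ := by
          rw [Matrix.mul_sub, Matrix.sub_mul, Matrix.mul_smul, Matrix.mul_one,
            Matrix.smul_mul, hMM', Matrix.one_mul]
      _ = M⁻¹ * ((ω₀ - s) • P) * P⁻¹ := by rw [h2]
      _ = (ω₀ - s) • M⁻¹ := by
          rw [Matrix.mul_smul, Matrix.smul_mul, Matrix.mul_assoc, hPP, Matrix.mul_one]
  rw [hsA, hinvA, hzinv]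
  have hmid : (c • (cm * P⁻¹)) * (P * M⁻¹) * (c • (P⁻¹ * b))
      = (2 * ω₀) • (cm * (M⁻¹ * P⁻¹) * b) := by
    rw [Matrix.smul_mul, Matrix.smul_mul, Matrix.mul_smul, smul_smul, hc]
    congr 1
    simp only [← Matrix.mul_assoc]
    rw [Matrix.mul_assoc cm P⁻¹ P, hPP', Matrix.mul_one]
  rw [hmid]
  have key : cm * ((2 * ω₀) • (M⁻¹ * P⁻¹) - P⁻¹) * b = cm * ((ω₀ - s) • M⁻¹) * b := by
    rw [hE]
  rw [Matrix.mul_sub, Matrix.sub_mul, Matrix.mul_smul, Matrix.smul_mul] at key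
  rw [← key]
  abel
/-- The Tustin transformation preserves innerness. If
`H(z) = D + C(zI − A)⁻¹B` (real matrices regarded over ℂ) satisfies
`H(z) H(z⁻¹)ᵀ = I` wherever defined, then the Tustin transform
`G(s) = D̄ + C̄(sI − Ā)⁻¹B̄` satisfies `G(s) G(−s)ᵀ = I` wherever defined. -/
theorem stmt10 (n m : ℕ) (ω₀ : ℝ) (hω : 0 < ω₀)
    (A : Matrix (Fin n) (Fin n) ℝ) (B : Matrix (Fin n) (Fin m) ℝ)
    (C : Matrix (Fin m) (Fin n) ℝ) (D : Matrix (Fin m) (Fin m) ℝ)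
    (hIA : IsUnit ((1 : Matrix (Fin n) (Fin n) ℝ) + A))
    (H : ℂ → Matrix (Fin m) (Fin m) ℂ)
    (hH : ∀ z : ℂ, H z = D.map (algebraMap ℝ ℂ) +
      C.map (algebraMap ℝ ℂ) *
        (z • (1 : Matrix (Fin n) (Fin n) ℂ) - A.map (algebraMap ℝ ℂ))⁻¹ *
        B.map (algebraMap ℝ ℂ))
    (hinner : ∀ z : ℂ, z ≠ 0 →
      IsUnit (z • (1 : Matrix (Fin n) (Fin n) ℂ) - A.map (algebraMap ℝ ℂ)) →
      IsUnit (z⁻¹ • (1 : Matrix (Fin n) (Fin n) ℂ) - A.map (algebraMap ℝ ℂ)) →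
      H z * (H z⁻¹)ᵀ = 1)
    (Abar : Matrix (Fin n) (Fin n) ℂ)
    (hAbar : Abar = (ω₀ : ℂ) •
      ((A.map (algebraMap ℝ ℂ) - 1) * (A.map (algebraMap ℝ ℂ) + 1)⁻¹))
    (Bbar : Matrix (Fin n) (Fin m) ℂ)
    (hBbar : Bbar = (Real.sqrt (2 * ω₀) : ℂ) •
      ((1 + A.map (algebraMap ℝ ℂ))⁻¹ * B.map (algebraMap ℝ ℂ)))
    (Cbar : Matrix (Fin m) (Fin n) ℂ)
    (hCbar : Cbar = (Real.sqrt (2 * ω₀) : ℂ) •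
      (C.map (algebraMap ℝ ℂ) * (1 + A.map (algebraMap ℝ ℂ))⁻¹))
    (Dbar : Matrix (Fin m) (Fin m) ℂ)
    (hDbar : Dbar = D.map (algebraMap ℝ ℂ) -
      C.map (algebraMap ℝ ℂ) * (1 + A.map (algebraMap ℝ ℂ))⁻¹ * B.map (algebraMap ℝ ℂ))
    (G : ℂ → Matrix (Fin m) (Fin m) ℂ)
    (hG : ∀ s : ℂ, G s =
      Dbar + Cbar * (s • (1 : Matrix (Fin n) (Fin n) ℂ) - Abar)⁻¹ * Bbar) :
    ∀ s : ℂ, s ≠ (ω₀ : ℂ) → s ≠ -(ω₀ : ℂ) →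
      IsUnit (s • (1 : Matrix (Fin n) (Fin n) ℂ) - Abar) →
      IsUnit ((-s) • (1 : Matrix (Fin n) (Fin n) ℂ) - Abar) →
      IsUnit ((((ω₀ : ℂ) + s) / ((ω₀ : ℂ) - s)) • (1 : Matrix (Fin n) (Fin n) ℂ) -
        A.map (algebraMap ℝ ℂ)) →
      IsUnit ((((ω₀ : ℂ) + s) / ((ω₀ : ℂ) - s))⁻¹ • (1 : Matrix (Fin n) (Fin n) ℂ) -
        A.map (algebraMap ℝ ℂ)) →
      G s * (G (-s))ᵀ = 1 := by

  intro s hs1 hs2 _ _ h3 h4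
  set a : Matrix (Fin n) (Fin n) ℂ := A.map (algebraMap ℝ ℂ) with hadef
  have hPc : IsUnit ((1 : Matrix (Fin n) (Fin n) ℂ) + a) := by
    have h := hIA.map (RingHom.mapMatrix (algebraMap ℝ ℂ))
    rw [hadef]
    simpa [RingHom.mapMatrix_apply, Matrix.map_add, Matrix.map_one] using h
  have hsub1 : (ω₀ : ℂ) - s ≠ 0 := sub_ne_zero.mpr (Ne.symm hs1)
  have hsum : (ω₀ : ℂ) + s ≠ 0 := by
    intro h; exact hs2 (by linear_combination h)
  have hc : ((Real.sqrt (2 * ω₀) : ℝ) : ℂ) * ((Real.sqrt (2 * ω₀) : ℝ) : ℂ)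
      = 2 * (ω₀ : ℂ) := by
    rw [← Complex.ofReal_mul, Real.mul_self_sqrt (by positivity)]
    push_cast; ring
  set z : ℂ := ((ω₀ : ℂ) + s) / ((ω₀ : ℂ) - s) with hzdef
  have hz0 : z ≠ 0 := div_ne_zero hsum hsub1
  have hAbar' : Abar = (ω₀ : ℂ) • ((a - 1) * (1 + a)⁻¹) := by
    rw [hAbar, add_comm a 1]
  have e1 : G s = H z := by
    rw [hG, hH, hDbar, hCbar, hBbar, hAbar']
    exact tustin_key ω₀ s _ hc a _ _ _ hPc hsub1 h3
  have hz' : z⁻¹ = ((ω₀ : ℂ) + -s) / ((ω₀ : ℂ) - -s) := by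
    rw [hzdef, inv_div]; congr 1; ring
  have e2 : G (-s) = H z⁻¹ := by
    rw [hG, hH, hDbar, hCbar, hBbar, hAbar', hz']
    refine tustin_key ω₀ (-s) _ hc a _ _ _ hPc (by simpa using hsum) ?_
    rw [← hz']
    exact h4
  rw [e1, e2]
  exact hinner z hz0 h3 h4
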